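/- Let N, d0, d1, d2 be positive integers, X ∈ ℝ^{N×d0}, Y ∈ ℝ^{N×d2}, and T ∈ (0,∞]. Let W : [0,T) → ℝ^{d0×d1} and V : [0,T) → ℝ^{d1×d2} be absolutely continuous curves satisfying, for a.e. s ∈ [0,T), ‖W'(s)‖_F ≤ ‖X‖_op ‖V(s)‖_F √(2 L(s)) and ‖V'(s)‖_F ≤ ‖X‖_op ‖W(s)‖_F √(2 L(s)). Then for every t ∈ [0,T): √(‖W(t)−W(0)‖_F² + ‖V(t)−V(0)‖_F²) ≤ √2 · ‖X‖_op · (‖W(0)‖_F + ‖V(0)‖_F) · L̄(t) · exp(√2 · ‖X‖_op · L̄(t)), where L̄(t) = ∫₀ᵗ √(L(s)) ds. -/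

import Mathlib

open MeasureTheory ProbabilityTheory
open scoped ENNReal

noncomputable section

/-- The ReLU function. -/
def relu (x : ℝ) : ℝ := max x 0

/-- Frobenius norm of a real matrix. -/
def frob {m n : ℕ} (A : Matrix (Fin m) (Fin n) ℝ) : ℝ :=
  Real.sqrt (∑ i, ∑ j, (A i j) ^ 2)

/-- ℓ²→ℓ² operator norm of a real matrix. -/
def opNorm {m n : ℕ} (A : Matrix (Fin m) (Fin n) ℝ) : ℝ :=
  ‖LinearMap.toContinuousLinearMap (Matrix.toEuclideanLin A)‖

/-- The MSE loss `L(W,V) = (1/2)‖Y − φ(XW)V‖_F²`. -/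
def mseLoss {N d0 d1 d2 : ℕ} (X : Matrix (Fin N) (Fin d0) ℝ) (Y : Matrix (Fin N) (Fin d2) ℝ)
    (W : Matrix (Fin d0) (Fin d1) ℝ) (V : Matrix (Fin d1) (Fin d2) ℝ) : ℝ :=
  (1 / 2) * (frob (Y - ((X * W).map relu) * V)) ^ 2

lemma frob_eq_norm {m n : ℕ} (A : Matrix (Fin m) (Fin n) ℝ) :
    frob A = ‖(WithLp.toLp 2 (fun p : Fin m × Fin n => A p.1 p.2) : EuclideanSpace ℝ (Fin m × Fin n))‖ := by
  rw [EuclideanSpace.norm_eq, frob, Fintype.sum_prod_type]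
  simp [sq_abs]

lemma frob_nonneg {m n : ℕ} (A : Matrix (Fin m) (Fin n) ℝ) : 0 ≤ frob A := Real.sqrt_nonneg _

lemma frob_sq {m n : ℕ} (A : Matrix (Fin m) (Fin n) ℝ) : frob A ^ 2 = ∑ i, ∑ j, (A i j) ^ 2 := by
  rw [frob, Real.sq_sqrt]
  positivity

lemma frob_triangle {m n : ℕ} (A B : Matrix (Fin m) (Fin n) ℝ) :
    frob A ≤ frob (A - B) + frob B := by
  rw [frob_eq_norm, frob_eq_norm, frob_eq_norm]
  have h := norm_add_le (E := EuclideanSpace ℝ (Fin m × Fin n))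
    (WithLp.toLp 2 (fun p : Fin m × Fin n => (A - B) p.1 p.2) : EuclideanSpace ℝ (Fin m × Fin n))
    (WithLp.toLp 2 (fun p : Fin m × Fin n => B p.1 p.2) : EuclideanSpace ℝ (Fin m × Fin n))
  have e : (WithLp.toLp 2 (fun p : Fin m × Fin n => A p.1 p.2) : EuclideanSpace ℝ (Fin m × Fin n))
      = (WithLp.toLp 2 (fun p : Fin m × Fin n => (A - B) p.1 p.2) : EuclideanSpace ℝ (Fin m × Fin n))
        + (WithLp.toLp 2 (fun p : Fin m × Fin n => B p.1 p.2) : EuclideanSpace ℝ (Fin m × Fin n)) := by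
    ext p
    simp [Matrix.sub_apply]
  rw [e]
  exact h

lemma intervalIntegrable_finset_sum' {ι : Type*} {E : Type*} [NormedAddCommGroup E]
    (s : Finset ι) {f : ι → ℝ → E} {a b : ℝ}
    (h : ∀ i ∈ s, IntervalIntegrable (f i) volume a b) :
    IntervalIntegrable (fun x => ∑ i ∈ s, f i x) volume a b := by
  classical
  induction s using Finset.induction with
  | empty => simp only [Finset.sum_empty]; exact intervalIntegrable_const
  | insert _ _ hni ih =>
    simp only [Finset.sum_insert hni]
    exact (h _ (Finset.mem_insert_self _ _)).add
      (ih fun i hi => h i (Finset.mem_insert_of_mem hi))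

lemma frob_integral_le {m n : ℕ} (g : ℝ → Matrix (Fin m) (Fin n) ℝ) {t : ℝ} (ht : 0 ≤ t)
    (hint : ∀ i j, IntervalIntegrable (fun s => g s i j) volume 0 t)
    {h : ℝ → ℝ} (hh : IntervalIntegrable h volume 0 t)
    (hbound : ∀ᵐ s ∂(volume.restrict (Set.Icc (0:ℝ) t)), frob (g s) ≤ h s) :
    frob (Matrix.of fun i j => ∫ s in (0:ℝ)..t, g s i j) ≤ ∫ s in (0:ℝ)..t, h s := by
  set E := EuclideanSpace ℝ (Fin m × Fin n)
  set G : ℝ → E := fun s => ∑ p : Fin m × Fin n, (g s p.1 p.2) • EuclideanSpace.single p (1:ℝ)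
    with hG
  have hsum : ∀ (v : Fin m × Fin n → E) (q : Fin m × Fin n),
      (∑ p : Fin m × Fin n, v p) q = ∑ p : Fin m × Fin n, v p q := by
    intro v q
    classical
    induction (Finset.univ : Finset (Fin m × Fin n)) using Finset.induction with
    | empty => rfl
    | insert _ _ hni ih =>
      rw [Finset.sum_insert hni, Finset.sum_insert hni]
      show v _ q + (∑ p ∈ _, v p) q = _
      rw [ih]
  have hGapp : ∀ s q, G s q = g s q.1 q.2 := by
    intro s q
    rw [hG]
    simp only []
    rw [hsum]
    simp [PiLp.smul_apply, EuclideanSpace.single_apply]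
  have hGint : IntervalIntegrable G volume 0 t := by
    apply intervalIntegrable_finset_sum'
    intro p _
    exact ⟨((hint p.1 p.2).1).smul_const _, ((hint p.1 p.2).2).smul_const _⟩
  have hcoord : ∀ q : Fin m × Fin n,
      (∫ s in (0:ℝ)..t, G s) q = ∫ s in (0:ℝ)..t, g s q.1 q.2 := by
    intro q
    have h1 := (EuclideanSpace.proj (𝕜 := ℝ) q).intervalIntegral_comp_comm hGint
    have h2 : (∫ s in (0:ℝ)..t, G s) q
        = (EuclideanSpace.proj (𝕜 := ℝ) q) (∫ s in (0:ℝ)..t, G s) := rfl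
    rw [h2, ← h1]
    congr 1
    funext s
    show G s q = _
    rw [hGapp]
  have heq : frob (Matrix.of fun i j => ∫ s in (0:ℝ)..t, g s i j) = ‖∫ s in (0:ℝ)..t, G s‖ := by
    rw [frob_eq_norm]
    congr 1
    ext p
    rw [hcoord p]
    rfl
  rw [heq]
  calc ‖∫ s in (0:ℝ)..t, G s‖ ≤ ∫ s in (0:ℝ)..t, ‖G s‖ :=
        intervalIntegral.norm_integral_le_integral_norm ht
    _ ≤ ∫ s in (0:ℝ)..t, h s := by
        apply intervalIntegral.integral_mono_ae_restrict ht hGint.norm hh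
        filter_upwards [hbound] with s hs
        have : ‖G s‖ = frob (g s) := by
          rw [frob_eq_norm]
          congr 1
          ext p
          rw [hGapp]
        rw [this]; exact hs

lemma exp_sub_one_le' (x : ℝ) : Real.exp x - 1 ≤ x * Real.exp x := by
  have h := Real.add_one_le_exp (-x)
  have h2 : Real.exp (-x) * Real.exp x = 1 := by
    rw [← Real.exp_add]; simp
  nlinarith [Real.exp_pos x]

lemma gronwall_aux {u b : ℝ → ℝ} {A t₀ : ℝ} (ht₀ : 0 ≤ t₀)
    (hu : Continuous u) (hb : Continuous b) (hb0 : ∀ s, 0 ≤ b s)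
    (hineq : ∀ t ∈ Set.Icc 0 t₀, u t ≤ ∫ s in (0:ℝ)..t, b s * (u s + A)) :
    u t₀ ≤ A * (Real.exp (∫ s in (0:ℝ)..t₀, b s) - 1) := by
  set g : ℝ → ℝ := fun s => b s * (u s + A) with hgdef
  have hg : Continuous g := hb.mul (hu.add continuous_const)
  set Y : ℝ → ℝ := fun t => ∫ s in (0:ℝ)..t, g s with hYdef
  set B : ℝ → ℝ := fun t => ∫ s in (0:ℝ)..t, b s with hBdef
  have hY : ∀ t, HasDerivAt Y (g t) t := fun t =>
    intervalIntegral.integral_hasDerivAt_right (hg.intervalIntegrable _ _)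
      (hg.stronglyMeasurableAtFilter _ _) hg.continuousAt
  have hB : ∀ t, HasDerivAt B (b t) t := fun t =>
    intervalIntegral.integral_hasDerivAt_right (hb.intervalIntegrable _ _)
      (hb.stronglyMeasurableAtFilter _ _) hb.continuousAt
  set z : ℝ → ℝ := fun t => (Y t + A) * Real.exp (-B t) with hzdef
  have hz : ∀ t, HasDerivAt z
      (g t * Real.exp (-B t) + (Y t + A) * (Real.exp (-B t) * (-b t))) t := by
    intro t
    exact ((hY t).add_const A).mul ((hB t).neg.exp)
  have hYc : Continuous Y := continuous_iff_continuousAt.2 fun t => (hY t).continuousAt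
  have hBc : Continuous B := continuous_iff_continuousAt.2 fun t => (hB t).continuousAt
  have hzc : Continuous z := (hYc.add continuous_const).mul (Real.continuous_exp.comp hBc.neg)
  have hanti : AntitoneOn z (Set.Icc 0 t₀) := by
    apply antitoneOn_of_deriv_nonpos (convex_Icc 0 t₀)
    · exact hzc.continuousOn
    · intro x _
      exact (hz x).differentiableAt.differentiableWithinAt
    · intro x hx
      rw [interior_Icc] at hx
      rw [(hz x).deriv]
      have hxI : x ∈ Set.Icc 0 t₀ := Set.mem_Icc_of_Ioo hx
      have huY : u x ≤ Y x := hineq x hxI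
      have key : g x * Real.exp (-B x) + (Y x + A) * (Real.exp (-B x) * (-b x))
          = -(Real.exp (-B x) * (b x * (Y x - u x))) := by
        rw [hgdef]; ring
      rw [key, neg_nonpos]
      have := mul_nonneg (hb0 x) (sub_nonneg.2 huY)
      positivity
  have hz0 : z 0 = A := by
    simp [hzdef, hYdef, hBdef, intervalIntegral.integral_same]
  have hzt : z t₀ ≤ A := by
    rw [← hz0]
    exact hanti (Set.left_mem_Icc.2 ht₀) (Set.right_mem_Icc.2 ht₀) ht₀
  have hexp : Y t₀ + A ≤ A * Real.exp (B t₀) := by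
    have hmul := mul_le_mul_of_nonneg_right hzt (Real.exp_pos (B t₀)).le
    rw [hzdef] at hmul
    simp only [Real.exp_neg] at hmul
    rw [mul_assoc, inv_mul_cancel₀ (Real.exp_pos (B t₀)).ne'] at hmul
    simpa using hmul
  have hYt : u t₀ ≤ Y t₀ := hineq t₀ (Set.right_mem_Icc.2 ht₀)
  linarith [hYt, hexp]

lemma continuousOn_frob_comp {m n : ℕ} {F : ℝ → Matrix (Fin m) (Fin n) ℝ} {s : Set ℝ}
    (h : ∀ i j, ContinuousOn (fun r => F r i j) s) :
    ContinuousOn (fun r => frob (F r)) s := by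
  have hs : ContinuousOn (fun r => ∑ i, ∑ j, (F r i j) ^ 2) s :=
    continuousOn_finset_sum _ fun i _ =>
      continuousOn_finset_sum _ fun j _ => ((h i j).pow 2)
  exact Real.continuous_sqrt.comp_continuousOn hs

/-- Lemma: increment bound for the parameter trajectory. -/
theorem statement3
    (N d0 d1 d2 : ℕ) (hN : 0 < N) (hd0 : 0 < d0) (hd1 : 0 < d1) (hd2 : 0 < d2)
    (X : Matrix (Fin N) (Fin d0) ℝ) (Y : Matrix (Fin N) (Fin d2) ℝ)
    (T : ℝ≥0∞) (hT : 0 < T)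
    (W : ℝ → Matrix (Fin d0) (Fin d1) ℝ) (V : ℝ → Matrix (Fin d1) (Fin d2) ℝ)
    (W' : ℝ → Matrix (Fin d0) (Fin d1) ℝ) (V' : ℝ → Matrix (Fin d1) (Fin d2) ℝ)
    (L : ℝ → ℝ) (hL : L = fun s => mseLoss X Y (W s) (V s))
    -- absolute continuity of `W` with derivative `W'` (entrywise, in the sense of FTC)
    (hWac : ∀ t : ℝ, 0 ≤ t → ENNReal.ofReal t < T → ∀ i j,
      IntervalIntegrable (fun s => W' s i j) volume 0 t ∧
      W t i j - W 0 i j = ∫ s in (0:ℝ)..t, W' s i j)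
    -- absolute continuity of `V` with derivative `V'`
    (hVac : ∀ t : ℝ, 0 ≤ t → ENNReal.ofReal t < T → ∀ i j,
      IntervalIntegrable (fun s => V' s i j) volume 0 t ∧
      V t i j - V 0 i j = ∫ s in (0:ℝ)..t, V' s i j)
    -- a.e. derivative bounds on [0,T)
    (hW' : ∀ᵐ s ∂volume, 0 ≤ s → ENNReal.ofReal s < T →
      frob (W' s) ≤ opNorm X * frob (V s) * Real.sqrt (2 * L s))
    (hV' : ∀ᵐ s ∂volume, 0 ≤ s → ENNReal.ofReal s < T →
      frob (V' s) ≤ opNorm X * frob (W s) * Real.sqrt (2 * L s)) :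
    ∀ t : ℝ, 0 ≤ t → ENNReal.ofReal t < T →
      Real.sqrt (frob (W t - W 0) ^ 2 + frob (V t - V 0) ^ 2) ≤
        Real.sqrt 2 * opNorm X * (frob (W 0) + frob (V 0)) *
          (∫ s in (0:ℝ)..t, Real.sqrt (L s)) *
          Real.exp (Real.sqrt 2 * opNorm X * (∫ s in (0:ℝ)..t, Real.sqrt (L s))) := by
  intro t ht hTt
  have hmemT : ∀ s, 0 ≤ s → s ≤ t → ENNReal.ofReal s < T := fun s _ hst =>
    lt_of_le_of_lt (ENNReal.ofReal_le_ofReal hst) hTt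
  -- continuity of entries of W and V on [0,t]
  have hWc : ∀ i j, ContinuousOn (fun r => W r i j) (Set.Icc 0 t) := by
    intro i j
    have hInt : IntegrableOn (fun s => W' s i j) (Set.uIcc 0 t) volume := by
      rw [Set.uIcc_of_le ht]
      exact (intervalIntegrable_iff_integrableOn_Icc_of_le ht).1 (hWac t ht hTt i j).1
    have hprim := intervalIntegral.continuousOn_primitive_interval (a := 0) (b := t) hInt
    rw [Set.uIcc_of_le ht] at hprim
    apply ContinuousOn.congr ((continuousOn_const (c := W 0 i j)).add hprim)
    intro r hr
    have h2 := (hWac r hr.1 (hmemT r hr.1 hr.2) i j).2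
    simp only [Pi.add_apply]
    linarith
  have hVc : ∀ i j, ContinuousOn (fun r => V r i j) (Set.Icc 0 t) := by
    intro i j
    have hInt : IntegrableOn (fun s => V' s i j) (Set.uIcc 0 t) volume := by
      rw [Set.uIcc_of_le ht]
      exact (intervalIntegrable_iff_integrableOn_Icc_of_le ht).1 (hVac t ht hTt i j).1
    have hprim := intervalIntegral.continuousOn_primitive_interval (a := 0) (b := t) hInt
    rw [Set.uIcc_of_le ht] at hprim
    apply ContinuousOn.congr ((continuousOn_const (c := V 0 i j)).add hprim)
    intro r hr
    have h2 := (hVac r hr.1 (hmemT r hr.1 hr.2) i j).2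
    simp only [Pi.add_apply]
    linarith
  -- continuity of L and related functions on [0,t]
  have hLc : ContinuousOn L (Set.Icc 0 t) := by
    have hent : ∀ k l,
        ContinuousOn (fun s => (Y - ((X * W s).map relu) * V s) k l) (Set.Icc 0 t) := by
      intro k l
      simp only [Matrix.sub_apply, Matrix.mul_apply, Matrix.map_apply]
      apply ContinuousOn.sub continuousOn_const
      apply continuousOn_finset_sum
      intro j _
      apply ContinuousOn.mul
      · have hrelu : Continuous relu := continuous_id.max continuous_const
        exact hrelu.comp_continuousOn
          (continuousOn_finset_sum _ fun i _ => continuousOn_const.mul (hWc i j))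
      · exact hVc j l
    have hsum : ContinuousOn
        (fun s => (1/2 : ℝ) * ∑ k, ∑ l, ((Y - ((X * W s).map relu) * V s) k l) ^ 2)
        (Set.Icc 0 t) :=
      continuousOn_const.mul (continuousOn_finset_sum _ fun k _ =>
        continuousOn_finset_sum _ fun l _ => ((hent k l).pow 2))
    apply ContinuousOn.congr hsum
    intro r _
    rw [hL]
    simp only [mseLoss, frob_sq]
  have hL0 : ∀ s, 0 ≤ L s := by
    intro s
    rw [hL]
    simp only [mseLoss]
    positivity
  have hsqrtLc : ContinuousOn (fun s => Real.sqrt (L s)) (Set.Icc 0 t) :=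
    Real.continuous_sqrt.comp_continuousOn hLc
  have hfrobW : ContinuousOn (fun s => frob (W s)) (Set.Icc 0 t) :=
    continuousOn_frob_comp hWc
  have hfrobV : ContinuousOn (fun s => frob (V s)) (Set.Icc 0 t) :=
    continuousOn_frob_comp hVc
  -- constants
  set c : ℝ := Real.sqrt 2 * opNorm X with hcdef
  have hc0 : 0 ≤ c := mul_nonneg (Real.sqrt_nonneg _) (norm_nonneg _)
  set A : ℝ := frob (W 0) + frob (V 0) with hAdef
  have hA0 : 0 ≤ A := add_nonneg (frob_nonneg _) (frob_nonneg _)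
  -- clamp to [0,t]
  set π : ℝ → ℝ := fun s => max 0 (min s t) with hπdef
  have hπc : Continuous π := continuous_const.max (continuous_id.min continuous_const)
  have hπmem : ∀ s, π s ∈ Set.Icc 0 t := fun s =>
    ⟨le_max_left _ _, max_le ht (min_le_right _ _)⟩
  have hπid : ∀ s ∈ Set.Icc (0:ℝ) t, π s = s := by
    intro s hs
    rw [hπdef]
    simp only
    rw [min_eq_left hs.2, max_eq_right hs.1]
  -- the function u and its continuity
  set u : ℝ → ℝ := fun r => frob (W r - W 0) + frob (V r - V 0) with hudef
  have huc : ContinuousOn u (Set.Icc 0 t) := by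
    apply ContinuousOn.add
    · exact continuousOn_frob_comp fun i j => by
        simpa [Matrix.sub_apply, Pi.sub_def] using (hWc i j).sub continuousOn_const
    · exact continuousOn_frob_comp fun i j => by
        simpa [Matrix.sub_apply, Pi.sub_def] using (hVc i j).sub continuousOn_const
  set ut : ℝ → ℝ := fun r => u (π r) with hutdef
  have hutc : Continuous ut := huc.comp_continuous hπc hπmem
  set bt : ℝ → ℝ := fun s => c * Real.sqrt (L (π s)) with hbtdef
  have hbtc : Continuous bt :=
    continuous_const.mul (hsqrtLc.comp_continuous hπc hπmem)
  have hbt0 : ∀ s, 0 ≤ bt s := fun s => mul_nonneg hc0 (Real.sqrt_nonneg _)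
  -- bound functions
  set hw : ℝ → ℝ := fun s => opNorm X * frob (V s) * Real.sqrt (2 * L s) with hwdef
  set hv : ℝ → ℝ := fun s => opNorm X * frob (W s) * Real.sqrt (2 * L s) with hvdef
  have hwc : ContinuousOn hw (Set.Icc 0 t) :=
    (continuousOn_const.mul hfrobV).mul
      (Real.continuous_sqrt.comp_continuousOn (continuousOn_const.mul hLc))
  have hvc : ContinuousOn hv (Set.Icc 0 t) :=
    (continuousOn_const.mul hfrobW).mul
      (Real.continuous_sqrt.comp_continuousOn (continuousOn_const.mul hLc))
  -- the key integral inequality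
  have hkey : ∀ r ∈ Set.Icc (0:ℝ) t, ut r ≤ ∫ s in (0:ℝ)..r, bt s * (ut s + A) := by
    intro r hr
    have hr0 : (0:ℝ) ≤ r := hr.1
    have hIcc_sub : Set.Icc (0:ℝ) r ⊆ Set.Icc 0 t := Set.Icc_subset_Icc le_rfl hr.2
    have hwint : IntervalIntegrable hw volume 0 r :=
      ContinuousOn.intervalIntegrable (by rw [Set.uIcc_of_le hr0]; exact hwc.mono hIcc_sub)
    have hvint : IntervalIntegrable hv volume 0 r :=
      ContinuousOn.intervalIntegrable (by rw [Set.uIcc_of_le hr0]; exact hvc.mono hIcc_sub)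
    -- frob (W r - W 0) ≤ ∫ hw
    have hWr : W r - W 0 = Matrix.of fun i j => ∫ s in (0:ℝ)..r, W' s i j := by
      ext i j
      simpa [Matrix.sub_apply] using (hWac r hr0 (hmemT r hr0 hr.2) i j).2
    have hWb : frob (W r - W 0) ≤ ∫ s in (0:ℝ)..r, hw s := by
      rw [hWr]
      apply frob_integral_le _ hr0 (fun i j => (hWac r hr0 (hmemT r hr0 hr.2) i j).1) hwint
      filter_upwards [ae_restrict_mem measurableSet_Icc, ae_restrict_of_ae hW'] with s hs h
      exact h hs.1 (hmemT s hs.1 (hs.2.trans hr.2))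
    have hVr : V r - V 0 = Matrix.of fun i j => ∫ s in (0:ℝ)..r, V' s i j := by
      ext i j
      simpa [Matrix.sub_apply] using (hVac r hr0 (hmemT r hr0 hr.2) i j).2
    have hVb : frob (V r - V 0) ≤ ∫ s in (0:ℝ)..r, hv s := by
      rw [hVr]
      apply frob_integral_le _ hr0 (fun i j => (hVac r hr0 (hmemT r hr0 hr.2) i j).1) hvint
      filter_upwards [ae_restrict_mem measurableSet_Icc, ae_restrict_of_ae hV'] with s hs h
      exact h hs.1 (hmemT s hs.1 (hs.2.trans hr.2))
    have hsum : (∫ s in (0:ℝ)..r, hw s) + (∫ s in (0:ℝ)..r, hv s)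
        = ∫ s in (0:ℝ)..r, (hw s + hv s) :=
      (intervalIntegral.integral_add hwint hvint).symm
    have hbtint : IntervalIntegrable (fun s => bt s * (ut s + A)) volume 0 r :=
      (hbtc.mul (hutc.add continuous_const)).intervalIntegrable _ _
    have hmono : ∫ s in (0:ℝ)..r, (hw s + hv s) ≤ ∫ s in (0:ℝ)..r, bt s * (ut s + A) := by
      apply intervalIntegral.integral_mono_on hr0 (hwint.add hvint) hbtint
      intro s hs
      have hsmem : s ∈ Set.Icc (0:ℝ) t := hIcc_sub hs
      have hπs : π s = s := hπid s hsmem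
      have hsqrt2 : Real.sqrt (2 * L s) = Real.sqrt 2 * Real.sqrt (L s) :=
        Real.sqrt_mul (by norm_num) _
      have htriV : frob (V s) ≤ frob (V s - V 0) + frob (V 0) := frob_triangle _ _
      have htriW : frob (W s) ≤ frob (W s - W 0) + frob (W 0) := frob_triangle _ _
      have h1 : hw s + hv s
          = opNorm X * Real.sqrt (2 * L s) * (frob (V s) + frob (W s)) := by
        rw [hwdef, hvdef]; ring
      have h2 : bt s * (ut s + A) = c * Real.sqrt (L s) * (u s + A) := by
        rw [hbtdef, hutdef]
        simp only [hπs]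
      rw [h1, h2, hsqrt2, hcdef]
      have hfactor : opNorm X * (Real.sqrt 2 * Real.sqrt (L s)) * (frob (V s) + frob (W s))
          ≤ opNorm X * (Real.sqrt 2 * Real.sqrt (L s)) * (u s + A) := by
        apply mul_le_mul_of_nonneg_left _
          (mul_nonneg (norm_nonneg _) (mul_nonneg (Real.sqrt_nonneg _) (Real.sqrt_nonneg _)))
        rw [hudef, hAdef]
        simp only
        linarith
      calc opNorm X * (Real.sqrt 2 * Real.sqrt (L s)) * (frob (V s) + frob (W s))
          ≤ opNorm X * (Real.sqrt 2 * Real.sqrt (L s)) * (u s + A) := hfactor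
        _ = Real.sqrt 2 * opNorm X * Real.sqrt (L s) * (u s + A) := by ring
    have hutr : ut r = u r := by rw [hutdef]; simp only [hπid r hr]
    rw [hutr, hudef]
    simp only
    calc frob (W r - W 0) + frob (V r - V 0)
        ≤ (∫ s in (0:ℝ)..r, hw s) + (∫ s in (0:ℝ)..r, hv s) := add_le_add hWb hVb
      _ = ∫ s in (0:ℝ)..r, (hw s + hv s) := hsum
      _ ≤ ∫ s in (0:ℝ)..r, bt s * (ut s + A) := hmono
  -- apply Gronwall
  have hgron := gronwall_aux ht hutc hbtc hbt0 hkey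
  have hutt : ut t = u t := by rw [hutdef]; simp only [hπid t (Set.right_mem_Icc.2 ht)]
  set I : ℝ := ∫ s in (0:ℝ)..t, Real.sqrt (L s) with hIdef
  have hBt : ∫ s in (0:ℝ)..t, bt s = c * I := by
    have : ∫ s in (0:ℝ)..t, bt s = ∫ s in (0:ℝ)..t, c * Real.sqrt (L s) := by
      apply intervalIntegral.integral_congr
      intro s hs
      rw [Set.uIcc_of_le ht] at hs
      rw [hbtdef]
      simp only [hπid s hs]
    rw [this, intervalIntegral.integral_const_mul]
  rw [hutt, hBt] at hgron
  -- final algebra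
  have hfg : Real.sqrt (frob (W t - W 0) ^ 2 + frob (V t - V 0) ^ 2) ≤ u t := by
    have h1 : frob (W t - W 0) ^ 2 + frob (V t - V 0) ^ 2
        ≤ (frob (W t - W 0) + frob (V t - V 0)) ^ 2 := by
      nlinarith [mul_nonneg (frob_nonneg (W t - W 0)) (frob_nonneg (V t - V 0))]
    calc Real.sqrt (frob (W t - W 0) ^ 2 + frob (V t - V 0) ^ 2)
        ≤ Real.sqrt ((frob (W t - W 0) + frob (V t - V 0)) ^ 2) := Real.sqrt_le_sqrt h1
      _ = frob (W t - W 0) + frob (V t - V 0) :=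
          Real.sqrt_sq (add_nonneg (frob_nonneg _) (frob_nonneg _))
      _ = u t := by rw [hudef]
  have hexp : A * (Real.exp (c * I) - 1) ≤ A * (c * I * Real.exp (c * I)) :=
    mul_le_mul_of_nonneg_left (exp_sub_one_le' _) hA0
  calc Real.sqrt (frob (W t - W 0) ^ 2 + frob (V t - V 0) ^ 2)
      ≤ u t := hfg
    _ ≤ A * (Real.exp (c * I) - 1) := hgron
    _ ≤ A * (c * I * Real.exp (c * I)) := hexp
    _ = Real.sqrt 2 * opNorm X * (frob (W 0) + frob (V 0)) * I * Real.exp (c * I) := by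
        rw [hAdef, hcdef]; ring
    _ = _ := by rw [hcdef]
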